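/- arXiv:2104.12570 — 3 statements merged into one kernel-verified Lean document; each statement's English description precedes it below -/
import Mathlib

section
/- Let x be a real obs × vars matrix whose columns are all nonzero, let y ∈ ℝ^obs, and let (a^k) be any sequence in ℝ^vars produced by iterating the SolveBak update: at step k a column index j_k is chosen, da_k = ⟨x_{j_k}, e^k⟩ / ⟨x_{j_k}, x_{j_k}⟩ where e^k = y - x a^k, and a^{k+1} = a^k + da_k • e_{j_k}. Then the sequence of squared residual norms (‖y - x a^k‖²) is nonincreasing in k. -/
open scoped RealInnerProductSpace BigOperators

/-- The `j`-th column of the matrix `x`, as a vector in Euclidean space. -/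
def col {obs vars : ℕ} (x : Matrix (Fin obs) (Fin vars) ℝ) (j : Fin vars) :
    EuclideanSpace ℝ (Fin obs) :=
  WithLp.toLp 2 (fun i => x i j)

/-- The residual `y - x a` of the linear system `x a = y`, as a vector in Euclidean space. -/
def resid {obs vars : ℕ} (x : Matrix (Fin obs) (Fin vars) ℝ)
    (y : Fin obs → ℝ) (a : Fin vars → ℝ) : EuclideanSpace ℝ (Fin obs) :=
  WithLp.toLp 2 (fun i => y i - x.mulVec a i)

lemma resid_update {obs vars : ℕ} (x : Matrix (Fin obs) (Fin vars) ℝ)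
    (y : Fin obs → ℝ) (a : Fin vars → ℝ) (j : Fin vars) (d : ℝ) :
    resid x y (Function.update a j (a j + d)) = resid x y a - d • col x j := by
  ext i
  have : x.mulVec (Function.update a j (a j + d)) i = x.mulVec a i + d * x i j := by
    simp only [Matrix.mulVec, dotProduct]
    have hsplit : ∀ j' : Fin vars, x i j' * Function.update a j (a j + d) j'
        = x i j' * a j' + (if j' = j then d * x i j else 0) := by
      intro j'
      by_cases h : j' = j
      · subst h; simp [mul_add, mul_comm]
      · simp [h]
    simp only [hsplit, Finset.sum_add_distrib, Finset.sum_ite_eq' Finset.univ j,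
      Finset.mem_univ, if_true]
  show y i - _ = (y i - x.mulVec a i) - d * x i j
  rw [this]; ring

theorem solvebak_residuals_antitone (obs vars : ℕ) (hobs : 0 < obs) (hvars : 0 < vars)
    (x : Matrix (Fin obs) (Fin vars) ℝ) (hcols : ∀ j, col x j ≠ 0)
    (y : Fin obs → ℝ)
    (a : ℕ → Fin vars → ℝ) (jseq : ℕ → Fin vars) (da : ℕ → ℝ)
    (hda : ∀ k, da k =
      ⟪col x (jseq k), resid x y (a k)⟫ / ⟪col x (jseq k), col x (jseq k)⟫)
    (hstep : ∀ k, a (k + 1) = Function.update (a k) (jseq k) (a k (jseq k) + da k)) :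
    Antitone (fun k => ‖resid x y (a k)‖ ^ 2) := by
  apply antitone_nat_of_succ_le
  intro k
  set c := col x (jseq k) with hc
  set e := resid x y (a k) with he
  have hres : resid x y (a (k + 1)) = e - da k • c := by
    rw [hstep k, resid_update]
  have hcne : ‖c‖ ≠ 0 := norm_ne_zero_iff.mpr (hcols (jseq k))
  have hs : ⟪c, c⟫ = ‖c‖ ^ 2 := real_inner_self_eq_norm_sq c
  have hspos : (0:ℝ) < ‖c‖ ^ 2 := by positivity
  simp only [hres]
  rw [norm_sub_sq_real, real_inner_smul_right, norm_smul, mul_pow, hda k, ← hc, ← he, hs]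
  have ht : ⟪c, e⟫ = ⟪e, c⟫ := real_inner_comm e c
  rw [ht]
  set t := ⟪e, c⟫
  have : ‖e‖ ^ 2 - 2 * (t / ‖c‖ ^ 2 * t) + ‖t / ‖c‖ ^ 2‖ ^ 2 * ‖c‖ ^ 2
      = ‖e‖ ^ 2 - t ^ 2 / ‖c‖ ^ 2 := by
    rw [Real.norm_eq_abs, sq_abs, div_pow]
    field_simp
    ring
  rw [this]
  have : (0:ℝ) ≤ t ^ 2 / ‖c‖ ^ 2 := by positivity
  linarith
end

section
/- Let x be a real obs × vars matrix whose columns are all nonzero, let y ∈ ℝ^obs, and let (a^k) be any sequence in ℝ^vars produced by iterating the SolveBak update with column choices j_k and step sizes da_k = ⟨x_{j_k}, y - x a^k⟩ / ⟨x_{j_k}, x_{j_k}⟩. Then the sequence of squared residual norms s_k = ‖y - x a^k‖² is nonincreasing and bounded below by 0, and hence converges to a limit L with 0 ≤ L ≤ ‖y - x a^0‖². -/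
open scoped RealInnerProductSpace BigOperators

theorem solvebak_residuals_converge (obs vars : ℕ) (hobs : 0 < obs) (hvars : 0 < vars)
    (x : Matrix (Fin obs) (Fin vars) ℝ) (hcols : ∀ j, col x j ≠ 0)
    (y : Fin obs → ℝ)
    (a : ℕ → Fin vars → ℝ) (jseq : ℕ → Fin vars) (da : ℕ → ℝ)
    (hda : ∀ k, da k =
      ⟪col x (jseq k), resid x y (a k)⟫ / ⟪col x (jseq k), col x (jseq k)⟫)
    (hstep : ∀ k, a (k + 1) = Function.update (a k) (jseq k) (a k (jseq k) + da k)) :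
    Antitone (fun k => ‖resid x y (a k)‖ ^ 2) ∧
      (∀ k, 0 ≤ ‖resid x y (a k)‖ ^ 2) ∧
      ∃ L : ℝ, Filter.Tendsto (fun k => ‖resid x y (a k)‖ ^ 2) Filter.atTop (nhds L) ∧
        0 ≤ L ∧ L ≤ ‖resid x y (a 0)‖ ^ 2 := by
  have hkey : ∀ k, ‖resid x y (a (k+1))‖ ^ 2 ≤ ‖resid x y (a k)‖ ^ 2 := by
    intro k
    have hr : resid x y (a (k+1)) = resid x y (a k) - da k • col x (jseq k) := by
      rw [hstep k]; exact resid_update x y (a k) (jseq k) (da k)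
    set c := col x (jseq k)
    set r := resid x y (a k)
    have hcn : (0:ℝ) < ‖c‖ ^ 2 := pow_pos (norm_pos_iff.mpr (hcols (jseq k))) 2
    have hcc : ⟪c, c⟫ = ‖c‖ ^ 2 := real_inner_self_eq_norm_sq c
    have hd : da k = ⟪r, c⟫ / ‖c‖ ^ 2 := by
      rw [hda k, hcc, real_inner_comm]
    rw [hr, norm_sub_sq_real, real_inner_smul_right, norm_smul, mul_pow,
      Real.norm_eq_abs, sq_abs, hd]
    have h1 : 2 * (⟪r, c⟫ / ‖c‖ ^ 2 * ⟪r, c⟫) = 2 * (⟪r, c⟫ ^ 2 / ‖c‖ ^ 2) := by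
      field_simp
    have h2 : (⟪r, c⟫ / ‖c‖ ^ 2) ^ 2 * ‖c‖ ^ 2 = ⟪r, c⟫ ^ 2 / ‖c‖ ^ 2 := by
      field_simp
    rw [h1, h2]
    have : 0 ≤ ⟪r, c⟫ ^ 2 / ‖c‖ ^ 2 := div_nonneg (sq_nonneg _) hcn.le
    linarith
  have hanti : Antitone (fun k => ‖resid x y (a k)‖ ^ 2) :=
    antitone_nat_of_succ_le hkey
  have hnn : ∀ k, 0 ≤ ‖resid x y (a k)‖ ^ 2 := fun k => sq_nonneg _
  refine ⟨hanti, hnn, ?_⟩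
  have hbdd : BddBelow (Set.range fun k => ‖resid x y (a k)‖ ^ 2) :=
    ⟨0, by rintro _ ⟨k, rfl⟩; exact hnn k⟩
  refine ⟨⨅ k, ‖resid x y (a k)‖ ^ 2, tendsto_atTop_ciInf hanti hbdd, ?_, ?_⟩
  · exact le_ciInf hnn
  · exact ciInf_le hbdd 0
end

section
/- Let x be a real obs × vars matrix whose columns are all nonzero, let y ∈ ℝ^obs, and let (a^k) be a sequence produced by iterating the SolveBak update with column choices j_k and step sizes da_k = ⟨x_{j_k}, y - x a^k⟩ / ⟨x_{j_k}, x_{j_k}⟩. Then for every K ≥ 0 the squared errors telescope: ‖y - x a^0‖² - ‖y - x a^K‖² = Σ_{k=0}^{K-1} da_k² · ‖x_{j_k}‖². -/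
open scoped RealInnerProductSpace BigOperators

theorem solvebak_residuals_telescope (obs vars : ℕ) (hobs : 0 < obs) (hvars : 0 < vars)
    (x : Matrix (Fin obs) (Fin vars) ℝ) (hcols : ∀ j, col x j ≠ 0)
    (y : Fin obs → ℝ)
    (a : ℕ → Fin vars → ℝ) (jseq : ℕ → Fin vars) (da : ℕ → ℝ)
    (hda : ∀ k, da k =
      ⟪col x (jseq k), resid x y (a k)⟫ / ⟪col x (jseq k), col x (jseq k)⟫)
    (hstep : ∀ k, a (k + 1) = Function.update (a k) (jseq k) (a k (jseq k) + da k)) :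
    ∀ K : ℕ, ‖resid x y (a 0)‖ ^ 2 - ‖resid x y (a K)‖ ^ 2 =
      ∑ k ∈ Finset.range K, da k ^ 2 * ‖col x (jseq k)‖ ^ 2 := by
  have key : ∀ k, ‖resid x y (a k)‖ ^ 2 - ‖resid x y (a (k+1))‖ ^ 2
      = da k ^ 2 * ‖col x (jseq k)‖ ^ 2 := by
    intro k
    have hr : resid x y (a (k+1)) = resid x y (a k) - da k • col x (jseq k) := by
      rw [hstep k, resid_update]
    have hc : ⟪col x (jseq k), resid x y (a k)⟫ = da k * ‖col x (jseq k)‖ ^ 2 := by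
      rw [hda k, real_inner_self_eq_norm_sq]
      field_simp [pow_ne_zero_iff, norm_ne_zero_iff.mpr (hcols (jseq k))]
    rw [hr, norm_sub_sq_real, real_inner_smul_right, real_inner_comm, hc]
    simp [norm_smul, mul_pow]
    ring
  intro K
  induction K with
  | zero => simp
  | succ n ih =>
    rw [Finset.sum_range_succ, ← ih, ← key n]
    ring
end
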